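/- Let c > 0 and M ≥ 0, set T* = c^{1/2}·M, and let X : [0,∞) → ℝ be a differentiable nonnegative function such that X'(t) ≤ c·X(t)³ − X(t) for all t ≥ 0 and ∫₀^{T} X(s) ds ≤ M for every T > 0 (it suffices that ∫₀^{T*} X(s) ds ≤ M when T* > 0). Then X(t) ≤ c^{−1/2} for all t ≥ T*. -/

import Mathlib

open Set

/-- Any nonnegative solution of `X' ≤ cX³ − X` with time integral bounded by `M`
satisfies `X t ≤ c^{-1/2}` for all `t ≥ T* = c^{1/2} M`. -/
theorem eventually_below_threshold (c M : ℝ) (hc : 0 < c) (hM : 0 ≤ M)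
    (X X' : ℝ → ℝ)
    (hX : ∀ t, 0 ≤ t → HasDerivAt X (X' t) t)
    (hXnonneg : ∀ t, 0 ≤ t → 0 ≤ X t)
    (hineq : ∀ t, 0 ≤ t → X' t ≤ c * X t ^ 3 - X t)
    (hint : ∀ T, 0 < T → ∫ s in (0:ℝ)..T, X s ≤ M) :
    ∀ t, Real.sqrt c * M ≤ t → X t ≤ (Real.sqrt c)⁻¹ := by
  intro t ht
  set K : ℝ := (Real.sqrt c)⁻¹ with hKdef
  have hsc : 0 < Real.sqrt c := Real.sqrt_pos.mpr hc
  have hK : 0 < K := inv_pos.mpr hsc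
  have hcK2 : c * K ^ 2 = 1 := by
    have : Real.sqrt c ^ 2 = c := Real.sq_sqrt hc.le
    rw [hKdef, inv_pow, this, mul_inv_cancel₀ hc.ne']
  have ht0 : 0 ≤ t := le_trans (by positivity) ht
  have hcont : ∀ s, 0 ≤ s → ContinuousAt X s := fun s hs => (hX s hs).continuousAt
  -- Step 1 : there is t₀ ∈ [0,t] with X t₀ ≤ K
  obtain ⟨t₀, ht₀mem, ht₀⟩ : ∃ t₀ ∈ Icc (0:ℝ) t, X t₀ ≤ K := by
    by_contra h
    push_neg at h
    -- X > K on [0, t]; by continuity extend a bit beyond t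
    have hXt : K < X t := h t ⟨ht0, le_refl t⟩
    obtain ⟨η, hη, hball⟩ : ∃ η > 0, ∀ s, |s - t| ≤ η → K < X s := by
      have := (hcont t ht0).eventually (eventually_gt_nhds hXt)
      rcases Metric.eventually_nhds_iff.mp this with ⟨δ, hδ, hδ'⟩
      exact ⟨δ/2, by positivity, fun s hs => hδ' (by
        simp only [Real.dist_eq]
        linarith [abs_nonneg (s - t)])⟩
    set b : ℝ := t + η with hb
    have hbpos : 0 < b := by positivity
    have hgt : ∀ s ∈ Icc (0:ℝ) b, K < X s := by
      intro s hs
      rcases le_or_gt s t with h1 | h1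
      · exact h s ⟨hs.1, h1⟩
      · exact hball s (by rw [abs_le]; constructor <;> [linarith; linarith [hs.2]])
    -- min of X on the compact interval
    obtain ⟨m, hmmem, hmin⟩ := isCompact_Icc.exists_isMinOn (f := X)
      (nonempty_Icc.mpr hbpos.le) (fun s hs => (hcont s hs.1).continuousWithinAt)
    have hmK : K < X m := hgt m hmmem
    have hXint : IntervalIntegrable X MeasureTheory.volume 0 b := by
      apply ContinuousOn.intervalIntegrable
      intro s hs
      rw [uIcc_of_le hbpos.le] at hs
      exact (hcont s hs.1).continuousWithinAt
    have hlow : b * X m ≤ ∫ s in (0:ℝ)..b, X s := by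
      have := intervalIntegral.integral_mono_on hbpos.le
        (intervalIntegrable_const (c := X m)) hXint (fun s hs => hmin hs)
      simpa using this
    have hMb : K * b < b * X m := by
      rw [mul_comm b]
      exact mul_lt_mul_of_pos_right hmK hbpos
    have hKb : M ≤ K * b := by
      have : K * (Real.sqrt c * M) = M := by
        field_simp [hKdef]
        rw [hKdef, inv_mul_cancel₀ hsc.ne', one_mul]
      calc M = K * (Real.sqrt c * M) := this.symm
        _ ≤ K * b := by
            apply mul_le_mul_of_nonneg_left _ hK.le
            calc Real.sqrt c * M ≤ t := ht
              _ ≤ b := by linarith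
    have := hint b hbpos
    linarith
  -- Step 2 : barrier argument from t₀ to t
  rcases eq_or_lt_of_le ht₀mem.2 with heq | hlt
  · rwa [heq] at ht₀
  apply le_of_forall_pos_le_add
  intro ε hε
  set L : ℝ := 3 * c * (K + 1) ^ 2 with hL
  have hLpos : 0 < L := by positivity
  set ε₀ : ℝ := min ε 1 * Real.exp (-((L + 1) * (t - t₀))) with hε₀
  have hε₀pos : 0 < ε₀ := by
    apply mul_pos (lt_min hε one_pos) (Real.exp_pos _)
  set B : ℝ → ℝ := fun s => K + ε₀ * Real.exp ((L + 1) * (s - t₀)) with hB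
  set B' : ℝ → ℝ := fun s => ε₀ * (Real.exp ((L + 1) * (s - t₀)) * (L + 1)) with hB'
  have hBderiv : ∀ s, HasDerivAt B (B' s) s := by
    intro s
    have h1 : HasDerivAt (fun s : ℝ => (L + 1) * (s - t₀)) (L + 1) s := by
      simpa using ((hasDerivAt_id s).sub_const t₀).const_mul (L + 1)
    have h2 := (h1.exp.const_mul ε₀).const_add K
    simpa [hB, hB', mul_comm] using h2
  -- cubic bound : for K ≤ y ≤ K + 1, c y³ − y ≤ L (y − K)
  have hcubic : ∀ y, K ≤ y → y ≤ K + 1 → c * y ^ 3 - y ≤ L * (y - K) := by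
    intro y h1 h2
    nlinarith [hcK2, mul_nonneg (mul_nonneg hc.le (sub_nonneg.mpr h1)) (sub_nonneg.mpr h1),
      mul_nonneg hc.le (sub_nonneg.mpr h1), hK.le,
      mul_nonneg (mul_nonneg hc.le hK.le) (sub_nonneg.mpr h1)]
  have key : ∀ x ∈ Icc t₀ t, X x ≤ B x := by
    apply image_le_of_deriv_right_lt_deriv_boundary
      (f' := X') (B' := B')
      (fun s hs => (hcont s (le_trans ht₀mem.1 hs.1)).continuousWithinAt)
      (fun s hs => (hX s (le_trans ht₀mem.1 hs.1)).hasDerivWithinAt)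
      _ hBderiv
    · intro x hx hXB
      have hx0 : 0 ≤ x := le_trans ht₀mem.1 hx.1
      have hexp_le : Real.exp ((L + 1) * (x - t₀)) ≤ Real.exp ((L + 1) * (t - t₀)) := by
        apply Real.exp_le_exp.mpr
        apply mul_le_mul_of_nonneg_left (by linarith [hx.2]) (by positivity)
      have hup : ε₀ * Real.exp ((L + 1) * (x - t₀)) ≤ min ε 1 := by
        calc ε₀ * Real.exp ((L + 1) * (x - t₀)) ≤ ε₀ * Real.exp ((L + 1) * (t - t₀)) := by
              exact mul_le_mul_of_nonneg_left hexp_le hε₀pos.le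
          _ = min ε 1 * (Real.exp (-((L + 1) * (t - t₀))) * Real.exp ((L + 1) * (t - t₀))) := by
              rw [hε₀]; ring
          _ = min ε 1 := by rw [← Real.exp_add]; simp
      have hBx1 : B x ≤ K + 1 := by
        have : min ε 1 ≤ 1 := min_le_right _ _
        simp only [hB]; linarith
      have hBxK : K ≤ B x := by
        have : 0 < ε₀ * Real.exp ((L + 1) * (x - t₀)) := by positivity
        simp only [hB]; linarith
      calc X' x ≤ c * X x ^ 3 - X x := hineq x hx0
        _ = c * B x ^ 3 - B x := by rw [hXB]
        _ ≤ L * (B x - K) := hcubic _ hBxK hBx1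
        _ = L * (ε₀ * Real.exp ((L + 1) * (x - t₀))) := by simp [hB]
        _ < (L + 1) * (ε₀ * Real.exp ((L + 1) * (x - t₀))) := by
            apply mul_lt_mul_of_pos_right (by linarith) (by positivity)
        _ = B' x := by simp [hB']; ring
    · -- X t₀ ≤ B t₀
      simp only [hB, sub_self, mul_zero, Real.exp_zero, mul_one]
      linarith
  have hfin := key t ⟨hlt.le, le_refl t⟩
  have : B t ≤ K + ε := by
    simp only [hB]
    have : ε₀ * Real.exp ((L + 1) * (t - t₀)) = min ε 1 := by
      rw [hε₀, mul_assoc, ← Real.exp_add]; simp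
    rw [this]
    linarith [min_le_left ε 1]
  linarith
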